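/- arXiv:1110.6310 — 3 statements merged into one kernel-verified Lean document; each statement's English description precedes it below -/
import Mathlib

section
/- Let α > 0, a, b ∈ ℝ and n ∈ ℕ. Then the integral I_n(a,b,α) = ∫_{-∞}^{∞} (a x + b)^n e^{-α x²} dx equals √(π/α) · H_n(b, a²/(4α)), where H_n is the two-variable Hermite polynomial. -/
open Real MeasureTheory

/-- Two-variable Hermite polynomials
`H_n(x,y) = n! ∑_{k=0}^{⌊n/2⌋} x^{n-2k} y^k / ((n-2k)! k!)`. -/
noncomputable def hermite2 (n : ℕ) (x y : ℝ) : ℝ :=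
  (n.factorial : ℝ) * ∑ k ∈ Finset.range (n / 2 + 1),
    x ^ (n - 2 * k) * y ^ k / ((Nat.factorial (n - 2 * k) : ℝ) * (Nat.factorial k : ℝ))

lemma my_integrable_pow {α : ℝ} (hα : 0 < α) (m : ℕ) :
    Integrable fun x : ℝ => x ^ m * Real.exp (-α * x ^ 2) := by
  have hm : (-1 : ℝ) < (m : ℝ) := lt_of_lt_of_le neg_one_lt_zero (Nat.cast_nonneg m)
  simpa [Real.rpow_natCast] using integrable_rpow_mul_exp_neg_mul_sq hα hm

lemma my_gamma_half (k : ℕ) :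
    Real.Gamma ((k : ℝ) + 1/2) = (Nat.factorial (2*k)) * Real.sqrt π / (4^k * Nat.factorial k) := by
  induction k with
  | zero => simpa using Real.Gamma_one_half_eq
  | succ k ih =>
    have h : ((k+1 : ℕ) : ℝ) + 1/2 = ((k:ℝ) + 1/2) + 1 := by push_cast; ring
    rw [h, Real.Gamma_add_one (by positivity), ih]
    have h2 : (Nat.factorial (2*(k+1)) : ℝ) = (2*(k:ℝ)+2)*(2*(k:ℝ)+1)*(Nat.factorial (2*k) : ℝ) := by
      rw [show 2*(k+1) = (2*k+1)+1 by ring, Nat.factorial_succ, Nat.factorial_succ]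
      push_cast; ring
    have h3 : (Nat.factorial (k+1) : ℝ) = ((k:ℝ)+1) * Nat.factorial k := by
      rw [Nat.factorial_succ]; push_cast; ring
    rw [h2, h3]
    have hk : (Nat.factorial k : ℝ) ≠ 0 := Nat.cast_ne_zero.mpr (Nat.factorial_ne_zero k)
    have h4 : (4:ℝ)^k ≠ 0 := by positivity
    field_simp
    ring

lemma my_odd_moment {α : ℝ} (m : ℕ) (hm : Odd m) :
    ∫ x : ℝ, x ^ m * Real.exp (-α * x ^ 2) = 0 := by
  have h0 := integral_neg_eq_self (fun x : ℝ => x ^ m * Real.exp (-α * x ^ 2)) volume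
  have h : ∀ x : ℝ, (-x)^m * Real.exp (-α * (-x)^2) = -(x^m * Real.exp (-α*x^2)) := by
    intro x; rw [hm.neg_pow, neg_sq]; ring
  simp only [h] at h0
  rw [integral_neg] at h0
  linarith

lemma my_even_moment {α : ℝ} (hα : 0 < α) (k : ℕ) :
    ∫ x : ℝ, x ^ (2*k) * Real.exp (-α * x ^ 2)
      = Real.sqrt (π/α) * (Nat.factorial (2*k)) / (Nat.factorial k * (4*α)^k) := by
  have step1 : (∫ x : ℝ, x ^ (2*k) * Real.exp (-α * x ^ 2))
      = ∫ x : ℝ, (fun t : ℝ => t ^ (2*k) * Real.exp (-α * t ^ 2)) |x| := by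
    congr 1; funext x
    simp only [pow_mul, sq_abs]
  rw [step1, integral_comp_abs (f := fun t : ℝ => t ^ (2*k) * Real.exp (-α * t ^ 2))]
  have step2 : (∫ t in Set.Ioi (0:ℝ), t ^ (2*k) * Real.exp (-α * t ^ 2))
      = ∫ t in Set.Ioi (0:ℝ), t ^ ((2*k : ℕ) : ℝ) * Real.exp (-α * t ^ (2:ℝ)) := by
    congr 1; funext t
    rw [Real.rpow_natCast, Real.rpow_two]
  rw [step2, integral_rpow_mul_exp_neg_mul_rpow (by norm_num)
    (lt_of_lt_of_le neg_one_lt_zero (Nat.cast_nonneg _)) hα]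
  have hgam : (((2*k:ℕ):ℝ)+1)/2 = (k:ℝ)+1/2 := by push_cast; ring
  have hcast : (-(((2*k : ℕ):ℝ) + 1) / 2) = (-(k:ℝ)) + (-(1/2)) := by push_cast; ring
  rw [hgam, my_gamma_half, hcast, Real.rpow_add hα, Real.rpow_neg hα.le,
    Real.rpow_natCast, Real.rpow_neg hα.le, ← Real.sqrt_eq_rpow,
    Real.sqrt_div (le_of_lt pi_pos) α]
  have hsα : Real.sqrt α ≠ 0 := Real.sqrt_ne_zero'.mpr hα
  have hk : (Nat.factorial k : ℝ) ≠ 0 := Nat.cast_ne_zero.mpr (Nat.factorial_ne_zero k)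
  have hαk : (α:ℝ)^k ≠ 0 := by positivity
  have h4 : ((4:ℝ)*α)^k ≠ 0 := by positivity
  field_simp
  ring


theorem integral_affine_pow_mul_gaussian (α a b : ℝ) (hα : 0 < α) (n : ℕ) :
    ∫ x : ℝ, (a * x + b) ^ n * Real.exp (-α * x ^ 2)
      = Real.sqrt (π / α) * hermite2 n b (a ^ 2 / (4 * α)) := by
  have expand : ∀ x : ℝ, (a * x + b) ^ n * Real.exp (-α * x ^ 2)
      = ∑ j ∈ Finset.range (n+1),
        a^j * b^(n-j) * (n.choose j : ℝ) * (x ^ j * Real.exp (-α * x ^ 2)) := by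
    intro x
    rw [add_pow, Finset.sum_mul]
    refine Finset.sum_congr rfl fun j hj => ?_
    rw [mul_pow]; ring
  simp_rw [expand]
  rw [integral_finset_sum _ (fun j _ => ((my_integrable_pow hα j).const_mul _))]
  simp_rw [integral_const_mul]
  rw [← Finset.sum_filter_add_sum_filter_not (Finset.range (n+1)) (fun j => Even j)]
  have hodd : (∑ j ∈ (Finset.range (n+1)).filter (fun j => ¬ Even j),
      a^j * b^(n-j) * (n.choose j : ℝ) * ∫ x : ℝ, x ^ j * Real.exp (-α * x ^ 2)) = 0 := by
    apply Finset.sum_eq_zero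
    intro j hj
    rw [my_odd_moment j (Nat.not_even_iff_odd.mp (Finset.mem_filter.mp hj).2), mul_zero]
  rw [hodd, add_zero, hermite2, Finset.mul_sum, Finset.mul_sum]
  refine Finset.sum_nbij' (fun j => j / 2) (fun k => 2 * k) ?_ ?_ ?_ ?_ ?_
  · intro j hj
    obtain ⟨hjr, hje⟩ := Finset.mem_filter.mp hj
    obtain ⟨m, hm⟩ := hje
    rw [Finset.mem_range] at hjr ⊢
    omega
  · intro k hk
    rw [Finset.mem_range] at hk
    refine Finset.mem_filter.mpr ⟨Finset.mem_range.mpr (by omega), ⟨k, by ring⟩⟩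
  · intro j hj
    obtain ⟨hjr, hje⟩ := Finset.mem_filter.mp hj
    obtain ⟨m, hm⟩ := hje
    omega
  · intro k _; omega
  · intro j hj
    obtain ⟨hjr, hje⟩ := Finset.mem_filter.mp hj
    rw [Finset.mem_range] at hjr
    obtain ⟨m, hm⟩ := hje
    have hj2 : j = 2 * m := by omega
    subst hj2
    have h2kn : 2 * m ≤ n := by omega
    rw [Nat.mul_div_cancel_left m (by norm_num), my_even_moment hα m]
    have key : (n.choose (2*m) : ℝ) * (Nat.factorial (2*m) : ℝ) * (Nat.factorial (n - 2*m) : ℝ)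
        = (n.factorial : ℝ) := by
      exact_mod_cast congrArg (Nat.cast (R := ℝ)) (Nat.choose_mul_factorial_mul_factorial h2kn)
    rw [← key]
    have hm' : (Nat.factorial m : ℝ) ≠ 0 := Nat.cast_ne_zero.mpr (Nat.factorial_ne_zero m)
    have hnm : (Nat.factorial (n - 2*m) : ℝ) ≠ 0 := Nat.cast_ne_zero.mpr (Nat.factorial_ne_zero _)
    have h4α : ((4:ℝ)*α)^m ≠ 0 := by positivity
    rw [div_pow, pow_mul]
    field_simp
end

section
/- Let α > 0, β ∈ ℝ and d > 0. Then ∫_{0}^{∞} W_{α,β}(-x) e^{-d x} dx = (1/d) · E_{α,β}(-1/d), where E_{α,β} is the two-parameter (modified) Mittag-Leffler function. (The integrand is absolutely integrable since W_{α,β} is entire of order 1/(1+α) < 1.) -/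
open Real MeasureTheory Filter

/-- Wright–Bessel function `W_{α,β}(x) = ∑_{k=0}^∞ x^k / (k! Γ(kα + β))`. -/
noncomputable def wrightBessel (α β x : ℝ) : ℝ :=
  ∑' k : ℕ, x ^ k / ((k.factorial : ℝ) * Real.Gamma ((k : ℝ) * α + β))

/-- Two-parameter (modified) Mittag-Leffler function
`E_{α,β}(x) = ∑_{k=0}^∞ x^k / Γ(αk + β)`. -/
noncomputable def mittagLeffler (α β x : ℝ) : ℝ :=
  ∑' k : ℕ, x ^ k / Real.Gamma (α * (k : ℝ) + β)

open Set in
/-- Crude lower bound for the Gamma function. -/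
lemma gamma_lower_aux {M y : ℝ} (hM : 1 ≤ M) (hy : 1 ≤ y) :
    Real.exp (-(2 * M)) * M ^ y ≤ Real.Gamma y := by
  have hy0 : 0 < y := by linarith
  have hM0 : 0 < M := by linarith
  rw [Real.Gamma_eq_integral hy0]
  have hsub : Ioc M (2 * M) ⊆ Ioi (0 : ℝ) := fun x hx => lt_trans hM0 hx.1
  have hint : IntegrableOn (fun x => Real.exp (-x) * x ^ (y - 1)) (Ioc M (2 * M)) :=
    (Real.GammaIntegral_convergent hy0).mono_set hsub
  have h1 : ∫ x in Ioc M (2 * M), Real.exp (-x) * x ^ (y - 1)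
      ≤ ∫ x in Ioi 0, Real.exp (-x) * x ^ (y - 1) := by
    refine setIntegral_mono_set (Real.GammaIntegral_convergent hy0) ?_
      (HasSubset.Subset.eventuallyLE hsub)
    filter_upwards [ae_restrict_mem measurableSet_Ioi] with x hx
    have hx0 : (0:ℝ) < x := hx
    positivity
  refine le_trans ?_ h1
  have h2 : Real.exp (-(2 * M)) * M ^ (y - 1) * (volume (Ioc M (2 * M))).toReal
      ≤ ∫ x in Ioc M (2 * M), Real.exp (-x) * x ^ (y - 1) := by
    refine setIntegral_ge_of_const_le_real measurableSet_Ioc (by simp) ?_ hint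
    intro x hx
    have hx1 : M ≤ x := hx.1.le
    have hx2 : x ≤ 2 * M := hx.2
    have e1 : Real.exp (-(2 * M)) ≤ Real.exp (-x) := Real.exp_le_exp.2 (by linarith)
    have e2 : M ^ (y - 1) ≤ x ^ (y - 1) :=
      Real.rpow_le_rpow hM0.le hx1 (by linarith)
    exact mul_le_mul e1 e2 (Real.rpow_nonneg hM0.le _) (Real.exp_pos _).le
  have hvol : (volume (Ioc M (2 * M))).toReal = M := by
    rw [Real.volume_Ioc, ENNReal.toReal_ofReal (by linarith)]
    ring
  rw [hvol] at h2
  refine le_trans (le_of_eq ?_) h2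
  rw [Real.rpow_sub_one hM0.ne']
  field_simp

/-- Summability of the Mittag-Leffler-type series with absolute values. -/
lemma summable_ml_aux (α β : ℝ) (hα : 0 < α) {c : ℝ} (hc : 0 < c) :
    Summable (fun k : ℕ => c ^ k / |Real.Gamma ((k : ℝ) * α + β)|) := by
  obtain ⟨K, hK⟩ := exists_nat_ge ((1 - β) / α)
  rw [← summable_nat_add_iff K]
  have hKα : 1 - β ≤ K * α := by
    rw [div_le_iff₀ hα] at hK; linarith
  set M : ℝ := max 1 ((2 * c) ^ (α⁻¹)) with hMdef
  have hM1 : (1:ℝ) ≤ M := le_max_left _ _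
  have hM0 : (0:ℝ) < M := lt_of_lt_of_le one_pos hM1
  have hMα : 2 * c ≤ M ^ α := by
    calc 2 * c = ((2 * c) ^ (α⁻¹)) ^ α := (Real.rpow_inv_rpow (by positivity) hα.ne').symm
    _ ≤ M ^ α := Real.rpow_le_rpow (by positivity) (le_max_right _ _) hα.le
  have hgeo : Summable (fun n : ℕ =>
      (c ^ K * Real.exp (2 * M) / M ^ ((K : ℝ) * α + β)) * (1 / 2) ^ n) :=
    (summable_geometric_of_lt_one (by norm_num) (by norm_num)).mul_left _
  refine Summable.of_nonneg_of_le (fun n => by positivity) (fun n => ?_) hgeo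
  set y : ℝ := ((n + K : ℕ) : ℝ) * α + β with hydef
  have hy1 : 1 ≤ y := by
    have : (K:ℝ) * α ≤ ((n + K : ℕ) : ℝ) * α := by
      push_cast
      nlinarith [Nat.cast_nonneg (α := ℝ) n]
    simp only [hydef]; linarith
  have hΓ : Real.exp (-(2 * M)) * M ^ y ≤ Real.Gamma y := gamma_lower_aux hM1 hy1
  have hΓpos : 0 < Real.Gamma y := Real.Gamma_pos_of_pos (by linarith)
  have hMy : Real.exp (-(2 * M)) * ((2 * c) ^ n * M ^ ((K : ℝ) * α + β))
      ≤ Real.Gamma y := by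
    refine le_trans ?_ hΓ
    have hMy2 : M ^ y = (M ^ α) ^ n * M ^ ((K : ℝ) * α + β) := by
      have hy2 : y = α * (n : ℕ) + ((K : ℝ) * α + β) := by simp only [hydef]; push_cast; ring
      rw [hy2, Real.rpow_add hM0, Real.rpow_mul_natCast hM0.le]
    rw [hMy2]
    have h2c : (2 * c) ^ n ≤ (M ^ α) ^ n := pow_le_pow_left₀ (by positivity) hMα n
    have hP : (0:ℝ) < M ^ ((K : ℝ) * α + β) := Real.rpow_pos_of_pos hM0 _
    exact mul_le_mul_of_nonneg_left
      (mul_le_mul_of_nonneg_right h2c hP.le) (Real.exp_pos _).le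
  have habs : |Real.Gamma y| = Real.Gamma y := abs_of_pos hΓpos
  rw [habs]
  have hD : (0:ℝ) < Real.exp (-(2 * M)) * ((2 * c) ^ n * M ^ ((K : ℝ) * α + β)) := by
    positivity
  calc c ^ (n + K) / Real.Gamma y
      ≤ c ^ (n + K) / (Real.exp (-(2 * M)) * ((2 * c) ^ n * M ^ ((K : ℝ) * α + β))) :=
        div_le_div_of_nonneg_left (by positivity) hD hMy
    _ = (c ^ K * Real.exp (2 * M) / M ^ ((K : ℝ) * α + β)) * (1 / 2) ^ n := by
        rw [Real.exp_neg, pow_add, mul_pow, div_pow, one_pow]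
        have h2 : M ^ ((K : ℝ) * α + β) ≠ 0 := (Real.rpow_pos_of_pos hM0 _).ne'
        field_simp

open Set in
theorem laplace_wrightBessel (α β d : ℝ) (hα : 0 < α) (hd : 0 < d) :
    ∫ x in Set.Ioi (0 : ℝ), wrightBessel α β (-x) * Real.exp (-d * x)
      = (1 / d) * mittagLeffler α β (-(1 / d)) := by
  set F : ℕ → ℝ → ℝ := fun k x =>
    (-x) ^ k / ((k.factorial : ℝ) * Real.Gamma ((k : ℝ) * α + β)) * Real.exp (-d * x) with hF
  -- basic integrals
  have base_int : ∀ k : ℕ, IntegrableOn (fun x : ℝ => x ^ k * Real.exp (-d * x)) (Ioi 0) := by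
    intro k
    have := integrableOn_rpow_mul_exp_neg_mul_rpow (p := 1) (s := (k : ℝ)) (b := d)
      (by linarith [Nat.cast_nonneg (α := ℝ) k]) one_pos hd
    simpa [Real.rpow_one, Real.rpow_natCast] using this
  have base_val : ∀ k : ℕ,
      ∫ x in Ioi (0:ℝ), x ^ k * Real.exp (-d * x) = (1 / d) ^ (k + 1) * k.factorial := by
    intro k
    have h := Real.integral_rpow_mul_exp_neg_mul_Ioi (a := (k : ℝ) + 1) (r := d)
      (by positivity) hd
    rw [Real.Gamma_nat_eq_factorial] at h
    rw [show ((k:ℝ) + 1) = ((k + 1 : ℕ) : ℝ) by push_cast; ring, Real.rpow_natCast] at h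
    have e1 : ∀ x : ℝ, x ^ (((k + 1 : ℕ) : ℝ) - 1) * Real.exp (-(d * x))
        = x ^ k * Real.exp (-d * x) := by
      intro x
      push_cast
      rw [add_sub_cancel_right, Real.rpow_natCast, neg_mul]
    rw [← h]
    exact setIntegral_congr_fun measurableSet_Ioi (fun x _ => (e1 x).symm)
  -- each F k rewritten as a constant multiple
  have Feq : ∀ k : ℕ, F k = fun x =>
      ((-1) ^ k / ((k.factorial : ℝ) * Real.Gamma ((k : ℝ) * α + β)))
        * (x ^ k * Real.exp (-d * x)) := by
    intro k; funext x
    simp only [hF]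
    ring
  have hint : ∀ k : ℕ, Integrable (F k) (volume.restrict (Ioi 0)) := by
    intro k
    rw [Feq k]
    exact (base_int k).const_mul _
  -- the norm integrals
  have norm_val : ∀ k : ℕ, ∫ x in Ioi (0:ℝ), ‖F k x‖
      = (1 / d) * ((1 / d) ^ k / |Real.Gamma ((k : ℝ) * α + β)|) := by
    intro k
    have : ∫ x in Ioi (0:ℝ), ‖F k x‖
        = ∫ x in Ioi (0:ℝ),
            (x ^ k * Real.exp (-d * x)) * |(k.factorial : ℝ) * Real.Gamma ((k : ℝ) * α + β)|⁻¹ := by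
      refine setIntegral_congr_fun measurableSet_Ioi (fun x hx => ?_)
      have hx0 : (0:ℝ) < x := hx
      simp only [hF]
      rw [Real.norm_eq_abs, abs_mul, Real.abs_exp, abs_div, abs_pow, abs_neg,
        abs_of_pos hx0, div_eq_mul_inv]
      ring
    rw [this, integral_mul_const, base_val k]
    rcases eq_or_ne (Real.Gamma ((k : ℝ) * α + β)) 0 with h0 | h0
    · simp [h0]
    · have hfac : ((k.factorial : ℝ)) ≠ 0 := Nat.cast_ne_zero.mpr k.factorial_ne_zero
      rw [abs_mul, Nat.abs_cast, pow_succ]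
      have habs : |Real.Gamma ((k : ℝ) * α + β)| ≠ 0 := abs_ne_zero.2 h0
      field_simp
  have hsum : Summable fun k : ℕ => ∫ x in Ioi (0:ℝ), ‖F k x‖ := by
    simp only [norm_val]
    exact (summable_ml_aux α β hα (c := 1 / d) (by positivity)).mul_left _
  have key := MeasureTheory.integral_tsum_of_summable_integral_norm hint hsum
  have lhs_eq : ∫ x in Ioi (0:ℝ), wrightBessel α β (-x) * Real.exp (-d * x)
      = ∫ x in Ioi (0:ℝ), ∑' k : ℕ, F k x := by
    refine integral_congr_ae (Filter.Eventually.of_forall fun x => ?_)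
    simp only [hF, wrightBessel]
    exact (tsum_mul_right).symm
  rw [lhs_eq, ← key]
  -- compute each integral
  have term_val : ∀ k : ℕ, ∫ x in Ioi (0:ℝ), F k x
      = (1 / d) * ((-(1 / d)) ^ k / Real.Gamma (α * (k : ℝ) + β)) := by
    intro k
    rw [Feq k, integral_const_mul, base_val k]
    rw [mul_comm α ((k : ℝ))]
    rcases eq_or_ne (Real.Gamma ((k : ℝ) * α + β)) 0 with h0 | h0
    · simp [h0]
    · have hfac : ((k.factorial : ℝ)) ≠ 0 := Nat.cast_ne_zero.mpr k.factorial_ne_zero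
      rw [neg_pow (1 / d), pow_succ]
      field_simp
  simp only [term_val]
  rw [tsum_mul_left, mittagLeffler]
end

section
/- Let ν ∈ ℝ and x, y, t ∈ ℝ with |y t²| < 1. Then the exponential generating function of the auxiliary Hermite-like polynomials satisfies ∑_{n=0}^{∞} (tⁿ/n!) B_n(x, y; ν) = e^{x t} · W_{-1, ν+1/2}(y t²), where W_{-1, ν+1/2}(z) = ∑_{k=0}^{∞} z^k / (k! Γ(ν + 1/2 - k)) (a series with radius of convergence at least 1), and both series converge absolutely under the stated hypothesis. -/
open Real MeasureTheory Filter

/-- Auxiliary Hermite-like polynomials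
`B_n(x,y;ν) = n! ∑_{k=0}^{⌊n/2⌋} x^{n-2k} y^k / ((n-2k)! k! Γ(ν - k + 1/2))`. -/
noncomputable def auxB (n : ℕ) (x y ν : ℝ) : ℝ :=
  (n.factorial : ℝ) * ∑ k ∈ Finset.range (n / 2 + 1),
    x ^ (n - 2 * k) * y ^ k /
      ((Nat.factorial (n - 2 * k) : ℝ) * (Nat.factorial k : ℝ) * Real.Gamma (ν - k + 1 / 2))

theorem auxB_generating_function (ν x y t : ℝ) (h : |y * t ^ 2| < 1) :
    Summable (fun n : ℕ => t ^ n / (n.factorial : ℝ) * auxB n x y ν) ∧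
    Summable (fun k : ℕ =>
      (y * t ^ 2) ^ k / ((k.factorial : ℝ) * Real.Gamma (ν + 1 / 2 - k))) ∧
    ∑' n : ℕ, t ^ n / (n.factorial : ℝ) * auxB n x y ν
      = Real.exp (x * t) *
        ∑' k : ℕ, (y * t ^ 2) ^ k / ((k.factorial : ℝ) * Real.Gamma (ν + 1 / 2 - k)) := by
  set z : ℝ := y * t ^ 2 with hzdef
  set b : ℕ → ℝ :=
    fun k => z ^ k / ((k.factorial : ℝ) * Real.Gamma (ν + 1 / 2 - k)) with hbdef
  -- `N` is a threshold beyond which `k + 1/2 - ν > 0`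
  set N : ℕ := ⌈ν⌉₊ + 1 with hNdef
  have hN : ∀ k : ℕ, N ≤ k → 0 < (k : ℝ) + 1 / 2 - ν := by
    intro k hk
    have h1 : (ν : ℝ) ≤ (⌈ν⌉₊ : ℝ) := Nat.le_ceil ν
    have h2 : ((N : ℕ) : ℝ) ≤ (k : ℝ) := Nat.cast_le.2 hk
    have h3 : ((N : ℕ) : ℝ) = (⌈ν⌉₊ : ℝ) + 1 := by rw [hNdef]; push_cast; ring
    linarith
  -- the dominating sequence
  set M : ℕ → ℝ :=
    fun k => |z| ^ k * Real.Gamma ((k : ℝ) + 1 / 2 - ν) / (π * (k.factorial : ℝ)) with hMdef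
  have hMnonneg : ∀ k : ℕ, N ≤ k → 0 ≤ M k := by
    intro k hk
    have := Real.Gamma_nonneg_of_nonneg (hN k hk).le
    have hπ : (0 : ℝ) < π := Real.pi_pos
    have hfac : (0 : ℝ) < (k.factorial : ℝ) := by positivity
    apply div_nonneg (mul_nonneg (by positivity) this) (by positivity)
  -- ratio-test summability of M
  have hzr : |z| < (1 + |z|) / 2 := by linarith
  have hr1 : (1 + |z|) / 2 < 1 := by linarith
  have hratio : Tendsto (fun k : ℕ => |z| * (((k : ℝ) + 1 / 2 - ν) / ((k : ℝ) + 1)))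
      atTop (nhds (|z|)) := by
    have hconv : Tendsto (fun k : ℕ => (ν + 1 / 2) / ((k : ℝ) + 1)) atTop (nhds 0) := by
      apply Tendsto.div_atTop tendsto_const_nhds
      exact tendsto_atTop_add_const_right atTop 1 tendsto_natCast_atTop_atTop
    have heq : (fun k : ℕ => |z| * (((k : ℝ) + 1 / 2 - ν) / ((k : ℝ) + 1)))
        = fun k : ℕ => |z| * (1 - (ν + 1 / 2) / ((k : ℝ) + 1)) := by
      funext k
      have hk1 : ((k : ℝ) + 1) ≠ 0 := by positivity
      rw [one_sub_div hk1]
      congr 1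
      ring
    rw [heq]
    have := (tendsto_const_nhds (x := (1 : ℝ)) (f := atTop (α := ℕ))).sub hconv
    simpa using this.const_mul (|z|)
  have hMsum : Summable M := by
    apply summable_of_ratio_norm_eventually_le hr1
    filter_upwards [eventually_ge_atTop N, hratio.eventually_lt_const hzr] with k hk hklt
    have hgpos : 0 < (k : ℝ) + 1 / 2 - ν := hN k hk
    have hπ : (0 : ℝ) < π := Real.pi_pos
    have hfac : (0 : ℝ) < (k.factorial : ℝ) := by positivity
    have hΓrec : Real.Gamma (((k : ℕ) + 1 : ℕ) + 1 / 2 - ν)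
        = ((k : ℝ) + 1 / 2 - ν) * Real.Gamma ((k : ℝ) + 1 / 2 - ν) := by
      have : (((k : ℕ) + 1 : ℕ) : ℝ) + 1 / 2 - ν = ((k : ℝ) + 1 / 2 - ν) + 1 := by
        push_cast; ring
      rw [this, Real.Gamma_add_one hgpos.ne']
    have hkey : M (k + 1) = (|z| * (((k : ℝ) + 1 / 2 - ν) / ((k : ℝ) + 1))) * M k := by
      rw [hMdef]
      simp only
      rw [hΓrec, Nat.factorial_succ, pow_succ]
      push_cast
      field_simp
    have hMk : 0 ≤ M k := hMnonneg k hk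
    have hq0 : 0 ≤ |z| * (((k : ℝ) + 1 / 2 - ν) / ((k : ℝ) + 1)) := by positivity
    rw [Real.norm_eq_abs, Real.norm_eq_abs, abs_of_nonneg hMk,
      abs_of_nonneg (by rw [hkey]; exact mul_nonneg hq0 hMk)]
    rw [hkey]
    exact mul_le_mul_of_nonneg_right hklt.le hMk
  -- bound b by M eventually
  have hbM : ∀ᶠ k in cofinite, ‖b k‖ ≤ M k := by
    rw [Nat.cofinite_eq_atTop]
    filter_upwards [eventually_ge_atTop N] with k hk
    have hgpos : 0 < (k : ℝ) + 1 / 2 - ν := hN k hk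
    have hπ : (0 : ℝ) < π := Real.pi_pos
    have hfac : (0 : ℝ) < (k.factorial : ℝ) := by positivity
    have h1s : (1 : ℝ) - (ν + 1 / 2 - (k : ℝ)) = (k : ℝ) + 1 / 2 - ν := by ring
    have hΓ1s : 0 < Real.Gamma (1 - (ν + 1 / 2 - (k : ℝ))) := by
      rw [h1s]; exact Real.Gamma_pos_of_pos hgpos
    by_cases hΓ0 : Real.Gamma (ν + 1 / 2 - (k : ℝ)) = 0
    · have : b k = 0 := by
        rw [hbdef]
        simp only
        rw [hΓ0, mul_zero, div_zero]
      rw [this, norm_zero]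
      exact hMnonneg k hk
    · have hrefl := Real.Gamma_mul_Gamma_one_sub (ν + 1 / 2 - (k : ℝ))
      have hsin : Real.sin (π * (ν + 1 / 2 - (k : ℝ))) ≠ 0 := by
        intro hs
        rw [hs, div_zero] at hrefl
        exact hΓ0 (by
          rcases mul_eq_zero.1 hrefl with h' | h'
          · exact h'
          · exact absurd h' hΓ1s.ne')
      have h2 : Real.Gamma (ν + 1 / 2 - (k : ℝ)) * Real.Gamma (1 - (ν + 1 / 2 - (k : ℝ)))
          * Real.sin (π * (ν + 1 / 2 - (k : ℝ))) = π := by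
        rw [hrefl, div_mul_cancel₀ _ hsin]
      have hΓval : Real.Gamma (ν + 1 / 2 - (k : ℝ))
          = π / (Real.sin (π * (ν + 1 / 2 - (k : ℝ)))
              * Real.Gamma (1 - (ν + 1 / 2 - (k : ℝ)))) := by
        rw [eq_div_iff (mul_ne_zero hsin hΓ1s.ne')]
        linear_combination h2
      have hbk : b k = z ^ k * (Real.sin (π * (ν + 1 / 2 - (k : ℝ)))
          * Real.Gamma (1 - (ν + 1 / 2 - (k : ℝ)))) / ((k.factorial : ℝ) * π) := by
        rw [hbdef]
        simp only
        rw [hΓval, ← mul_div_assoc, div_div_eq_mul_div]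
      have hsle : |Real.sin (π * (ν + 1 / 2 - (k : ℝ)))| ≤ 1 := Real.abs_sin_le_one _
      calc ‖b k‖ = |z| ^ k * (|Real.sin (π * (ν + 1 / 2 - (k : ℝ)))|
            * Real.Gamma (1 - (ν + 1 / 2 - (k : ℝ)))) / ((k.factorial : ℝ) * π) := by
            rw [hbk, Real.norm_eq_abs, abs_div, abs_mul, abs_mul, abs_mul,
              abs_of_pos hΓ1s, abs_of_pos hπ, abs_of_pos hfac, abs_pow]
        _ ≤ |z| ^ k * (1 * Real.Gamma (1 - (ν + 1 / 2 - (k : ℝ))))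
              / ((k.factorial : ℝ) * π) := by
            gcongr
        _ = M k := by
            rw [hMdef]
            simp only
            rw [← h1s]
            ring
    -- end
  have hb : Summable b := Summable.of_norm_bounded_eventually hMsum hbM
  -- exponential series
  have ha : HasSum (fun m : ℕ => (x * t) ^ m / (m.factorial : ℝ)) (Real.exp (x * t)) := by
    have hs := Real.summable_pow_div_factorial (x * t)
    have hexp : Real.exp (x * t) = ∑' m : ℕ, (x * t) ^ m / (m.factorial : ℝ) := by
      rw [Real.exp_eq_exp_ℝ, NormedSpace.exp_eq_tsum_div]
    rw [hexp]
    exact hs.hasSum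
  -- product series
  set F : ℕ × ℕ → ℝ :=
    fun p => (x * t) ^ p.1 / (p.1.factorial : ℝ) * b p.2 with hFdef
  have hA : Summable fun m : ℕ => ‖(x * t) ^ m / (m.factorial : ℝ)‖ := by
    simp only [Real.norm_eq_abs]
    exact ha.summable.abs
  have hB : Summable fun k : ℕ => ‖b k‖ := by
    simp only [Real.norm_eq_abs]
    exact hb.abs
  have hF : Summable F := by
    apply Summable.of_norm
    exact hA.mul_norm hB
  have hFS : HasSum F (Real.exp (x * t) * ∑' k, b k) := ha.mul hb.hasSum hF
  -- reindexing
  set G : ℕ × ℕ → ℝ :=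
    fun p => if 2 * p.2 ≤ p.1 then F (p.1 - 2 * p.2, p.2) else 0 with hGdef
  set i : ℕ × ℕ → ℕ × ℕ := fun p => (p.1 + 2 * p.2, p.2) with hidef
  have hi : Function.Injective i := by
    rintro ⟨m, k⟩ ⟨m', k'⟩ hpq
    simp only [hidef, Prod.mk.injEq] at hpq
    obtain ⟨h1, h2⟩ := hpq
    subst h2
    exact Prod.ext (by omega) rfl
  have hGi : ∀ p : ℕ × ℕ, G (i p) = F p := by
    rintro ⟨m, k⟩
    simp only [hGdef, hidef]
    rw [if_pos (by omega)]
    congr 2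
    omega
  have hGsupp : ∀ p ∉ Set.range i, G p = 0 := by
    rintro ⟨n, k⟩ hp
    by_cases hle : 2 * k ≤ n
    · refine absurd ⟨(n - 2 * k, k), ?_⟩ hp
      simp only [hidef, Prod.mk.injEq]
      refine ⟨by omega, by simp⟩
    · simp only [hGdef]
      rw [if_neg hle]
  have hGS : HasSum G (Real.exp (x * t) * ∑' k, b k) := by
    rw [← hi.hasSum_iff hGsupp]
    have hcomp : G ∘ i = F := funext fun p => hGi p
    rw [hcomp]
    exact hFS
  -- rows
  have hrow : ∀ n : ℕ, HasSum (fun k : ℕ => G (n, k))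
      (t ^ n / (n.factorial : ℝ) * auxB n x y ν) := by
    intro n
    have h0 : ∀ k ∉ Finset.range (n / 2 + 1), G (n, k) = 0 := by
      intro k hk
      rw [Finset.mem_range] at hk
      simp only [hGdef]
      rw [if_neg (by omega)]
    have hsum := hasSum_sum_of_ne_finset_zero (L := SummationFilter.unconditional ℕ) h0
    have heq : ∑ k ∈ Finset.range (n / 2 + 1), G (n, k)
        = t ^ n / (n.factorial : ℝ) * auxB n x y ν := by
      rw [auxB, ← mul_assoc, div_mul_cancel₀ _ (by positivity : ((n.factorial : ℝ)) ≠ 0),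
        Finset.mul_sum]
      apply Finset.sum_congr rfl
      intro k hk
      rw [Finset.mem_range] at hk
      have hk2 : 2 * k ≤ n := by omega
      simp only [hGdef, hFdef, hbdef]
      rw [if_pos hk2]
      have hΓ : Real.Gamma (ν + 1 / 2 - (k : ℝ)) = Real.Gamma (ν - k + 1 / 2) := by
        ring_nf
      rw [hΓ, div_mul_div_comm]
      have hnum : (x * t) ^ (n - 2 * k) * z ^ k
          = t ^ n * (x ^ (n - 2 * k) * y ^ k) := by
        have ht : t ^ (n - 2 * k) * t ^ (2 * k) = t ^ n := by
          rw [← pow_add, Nat.sub_add_cancel hk2]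
        calc (x * t) ^ (n - 2 * k) * z ^ k
            = (x ^ (n - 2 * k) * t ^ (n - 2 * k)) * (y ^ k * (t ^ 2) ^ k) := by
              rw [hzdef, mul_pow, mul_pow]
          _ = (t ^ (n - 2 * k) * t ^ (2 * k)) * (x ^ (n - 2 * k) * y ^ k) := by
              rw [← pow_mul]; ring
          _ = t ^ n * (x ^ (n - 2 * k) * y ^ k) := by rw [ht]
      rw [hnum, mul_div_assoc, mul_assoc]
    rw [← heq]
    exact hsum
  have hTop : HasSum (fun n : ℕ => t ^ n / (n.factorial : ℝ) * auxB n x y ν)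
      (Real.exp (x * t) * ∑' k, b k) := hGS.prod_fiberwise hrow
  exact ⟨hTop.summable, hb, hTop.tsum_eq⟩
end
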